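/- Let ω be a dominant affine permutation on n letters (i.e., ω^{-1} is Graßmannian: ω^{-1}(1) < ⋯ < ω^{-1}(n)). For 1 ≤ i < j ≤ n, k_{i,j}(ω) = |⌊(ω^{-1}(j) − ω^{-1}(i))/n⌋| equals the number of affine inversions (a,b) of ω with ω(a) ≡ i (mod n) and ω(b) ≡ j (mod n). -/

import Mathlib

/-- The affine symmetric group on `n` letters: bijections `ω : ℤ → ℤ` with
`ω(i+n) = ω(i) + n` for all `i` and `ω(1) + ⋯ + ω(n) = n(n+1)/2`. -/
structure AffinePerm (n : ℕ) where
  toFun : ℤ → ℤ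
  bijective : Function.Bijective toFun
  shift : ∀ i : ℤ, toFun (i + n) = toFun i + n
  sum_window : ∑ i ∈ Finset.Icc (1 : ℤ) (n : ℤ), toFun i = n * (n + 1) / 2

/-- For dominant ω (ω⁻¹ Graßmannian) and 1 ≤ i < j ≤ n,
k_{i,j}(ω) = |⌊(ω⁻¹(j) − ω⁻¹(i))/n⌋| equals the number of affine inversions
(a,b) of ω with ω(a) ≡ i and ω(b) ≡ j modulo n. -/
theorem stmt15 (n : ℕ) (hn : 0 < n) (ω : AffinePerm n) (winv : ℤ → ℤ)
    (h1 : Function.LeftInverse winv ω.toFun)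
    (h2 : Function.RightInverse winv ω.toFun)
    (hdom : ∀ i j : ℤ, 1 ≤ i → i < j → j ≤ (n : ℤ) → winv i < winv j) :
    ∀ i j : ℤ, 1 ≤ i → i < j → j ≤ (n : ℤ) →
      ((winv j - winv i) / (n : ℤ)).natAbs
        = Set.ncard {ab : ℤ × ℤ | 1 ≤ ab.1 ∧ ab.1 ≤ (n : ℤ) ∧ ab.1 < ab.2 ∧
            ω.toFun ab.2 < ω.toFun ab.1 ∧
            ω.toFun ab.1 ≡ i [ZMOD (n : ℤ)] ∧ ω.toFun ab.2 ≡ j [ZMOD (n : ℤ)]} := by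
  intro i j hi hij hjn
  set N : ℤ := (n : ℤ) with hNdef
  have hN : 0 < N := by rw [hNdef]; exact_mod_cast hn
  -- general shift for ω
  have ωshift : ∀ (t x : ℤ), ω.toFun (x + t * N) = ω.toFun x + t * N := by
    intro t
    induction t using Int.induction_on with
    | zero => intro x; simp
    | succ k ih =>
      intro x
      have h := ω.shift (x + (k : ℤ) * N)
      have e : x + ((k : ℤ) + 1) * N = (x + (k : ℤ) * N) + N := by ring
      rw [e, h, ih]; ring
    | pred k ih =>
      intro x
      have h := ω.shift (x + (-(k : ℤ) - 1) * N)
      have e : (x + (-(k : ℤ) - 1) * N) + N = x + (-(k : ℤ)) * N := by ring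
      rw [e, ih] at h
      linarith
  have winvshift : ∀ (t x : ℤ), winv (x + t * N) = winv x + t * N := by
    intro t x
    have h : ω.toFun (winv x + t * N) = x + t * N := by rw [ωshift, h2 x]
    calc winv (x + t * N) = winv (ω.toFun (winv x + t * N)) := by rw [h]
      _ = winv x + t * N := h1 _
  set u := winv i with hu
  set v := winv j with hv
  have hd : 0 < v - u := by have := hdom i j hi hij hjn; omega
  set q := (v - u) / N with hq
  set r := (v - u) % N with hr
  have hr0 : 0 ≤ r := Int.emod_nonneg _ (ne_of_gt hN)
  have hrN : r < N := Int.emod_lt_of_pos _ hN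
  have hdqr : v - u = N * q + r := (Int.mul_ediv_add_emod _ _).symm
  have hq0 : 0 ≤ q := Int.ediv_nonneg hd.le hN.le
  have hrpos : 0 < r := by
    rcases hr0.lt_or_eq with h | h
    · exact h
    exfalso
    have hveq : v = u + q * N := by
      have := mul_comm N q
      linarith [h]
    have hj' : j = i + q * N := by
      have : ω.toFun v = ω.toFun (u + q * N) := by rw [hveq]
      rw [ωshift, h2, h2] at this
      exact this
    have hq1 : 1 ≤ q := by
      by_contra hc
      push_neg at hc
      have : q * N ≤ 0 := mul_nonpos_of_nonpos_of_nonneg (by omega) hN.le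
      linarith
    have : 1 * N ≤ q * N := mul_le_mul_of_nonneg_right hq1 hN.le
    linarith
  set s₀ := -((u - 1) / N) with hs₀
  set a₀ := u + s₀ * N with ha₀def
  have heq : u - 1 = N * (-s₀) + (u - 1) % N := by
    rw [hs₀, neg_neg]; exact (Int.mul_ediv_add_emod _ _).symm
  have he0 : 0 ≤ (u - 1) % N := Int.emod_nonneg _ (ne_of_gt hN)
  have heN : (u - 1) % N < N := Int.emod_lt_of_pos _ hN
  have ha1 : 1 ≤ a₀ := by
    have hc : N * (-s₀) = -(s₀ * N) := by ring
    rw [hc] at heq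
    linarith [heq]
  have ha2 : a₀ ≤ N := by
    have hc : N * (-s₀) = -(s₀ * N) := by ring
    rw [hc] at heq
    linarith [heq]
  -- the set is the image of an interval
  have hset : {ab : ℤ × ℤ | 1 ≤ ab.1 ∧ ab.1 ≤ N ∧ ab.1 < ab.2 ∧
      ω.toFun ab.2 < ω.toFun ab.1 ∧
      ω.toFun ab.1 ≡ i [ZMOD N] ∧ ω.toFun ab.2 ≡ j [ZMOD N]}
      = (fun t : ℤ => (a₀, v + t * N)) '' Set.Icc (s₀ - q) (s₀ - 1) := by
    ext ⟨a, b⟩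
    simp only [Set.mem_setOf_eq, Set.mem_image, Set.mem_Icc, Prod.mk.injEq]
    constructor
    · rintro ⟨hA1, hA2, hab, hba, hmi, hmj⟩
      obtain ⟨s, hs⟩ : ∃ s, ω.toFun a = i + s * N := by
        obtain ⟨c, hc⟩ := Int.ModEq.dvd hmi
        exact ⟨-c, by linarith⟩
      have haa : a = u + s * N := by
        have h := h1 a
        calc a = winv (ω.toFun a) := (h1 a).symm
          _ = winv (i + s * N) := by rw [hs]
          _ = u + s * N := by rw [winvshift]
      obtain ⟨t, ht⟩ : ∃ t, ω.toFun b = j + t * N := by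
        obtain ⟨c, hc⟩ := Int.ModEq.dvd hmj
        exact ⟨-c, by linarith⟩
      have hbb : b = v + t * N := by
        calc b = winv (ω.toFun b) := (h1 b).symm
          _ = winv (j + t * N) := by rw [ht]
          _ = v + t * N := by rw [winvshift]
      have hss : s = s₀ := by
        have hdiff : a - a₀ = (s - s₀) * N := by rw [haa, ha₀def]; ring
        by_contra hne
        rcases lt_or_gt_of_ne hne with h | h
        · have h1' : s - s₀ ≤ -1 := by omega
          have : (s - s₀) * N ≤ (-1) * N := mul_le_mul_of_nonneg_right h1' hN.le
          linarith
        · have h1' : 1 ≤ s - s₀ := by omega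
          have : 1 * N ≤ (s - s₀) * N := mul_le_mul_of_nonneg_right h1' hN.le
          linarith
      subst hss
      refine ⟨t, ⟨?_, ?_⟩, ha₀def.trans haa.symm, hbb.symm⟩
      · -- from a < b : s₀ - q ≤ t
        by_contra hc
        push_neg at hc
        have h1' : q + 1 ≤ s₀ - t := by omega
        have : (q + 1) * N ≤ (s₀ - t) * N := mul_le_mul_of_nonneg_right h1' hN.le
        have hcomm : N * q = q * N := mul_comm _ _
        rw [haa, hbb] at hab
        linarith
      · -- from ω b < ω a : t ≤ s₀ - 1
        by_contra hc
        push_neg at hc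
        have h1' : s₀ ≤ t := by omega
        have : s₀ * N ≤ t * N := mul_le_mul_of_nonneg_right h1' hN.le
        rw [hs, ht] at hba
        linarith
    · rintro ⟨t, ⟨ht1, ht2⟩, rfl, rfl⟩
      have hωa : ω.toFun a₀ = i + s₀ * N := by
        rw [ha₀def, ωshift, hu, h2]
      have hωb : ω.toFun (v + t * N) = j + t * N := by
        rw [ωshift, hv, h2]
      refine ⟨ha1, ha2, ?_, ?_, ?_, ?_⟩
      · have : (s₀ - q) * N ≤ t * N := mul_le_mul_of_nonneg_right ht1 hN.le
        have hcomm : N * q = q * N := mul_comm _ _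
        rw [ha₀def]
        linarith
      · rw [hωa, hωb]
        have : t * N ≤ (s₀ - 1) * N := mul_le_mul_of_nonneg_right ht2 hN.le
        linarith
      · rw [hωa, Int.modEq_iff_dvd]
        exact ⟨-s₀, by ring⟩
      · rw [hωb, Int.modEq_iff_dvd]
        exact ⟨-t, by ring⟩
  have hinj : Function.Injective (fun t : ℤ => (a₀, v + t * N)) := by
    intro t₁ t₂ h
    simp only [Prod.mk.injEq] at h
    have : t₁ * N = t₂ * N := by linarith [h.2]
    exact mul_right_cancel₀ (ne_of_gt hN) this
  rw [hset, Set.ncard_image_of_injective _ hinj, ← Finset.coe_Icc,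
    Set.ncard_coe_finset, Int.card_Icc]
  omega
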